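/- Let 1 < p, q < ∞ with 1/p + 1/q = 1. The map ψ : bv_p* → l_q defined by ψ(f) = (f(b^{(k)}))_{k≥1} is an isometric linear isomorphism; that is, ψ is linear, bijective, and satisfies ‖ψ(f)‖_q = ‖f‖ for every continuous linear functional f on bv_p. In particular, the continuous dual of bv_p is isometrically isomorphic to l_q. -/

import Mathlib

noncomputable section

open Filter Topology
open scoped ENNReal

/-- The difference operator: sequences indexed from `0`, representing `(x_k)_{k ≥ 1}`
(so index `n : ℕ` stands for `x_{n+1}`), with the convention `x_0 = 0`. -/
def delta (x : ℕ → ℂ) : ℕ → ℂ := fun n => x n - if n = 0 then 0 else x (n - 1)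

/-- The difference operator as a linear equivalence of the space of all sequences,
with inverse given by partial sums. -/
def deltaL : (ℕ → ℂ) ≃ₗ[ℂ] (ℕ → ℂ) where
  toFun := delta
  invFun y := fun n => ∑ i ∈ Finset.range (n + 1), y i
  map_add' x y := by
    funext n
    simp only [delta, Pi.add_apply]
    split <;> ring
  map_smul' c x := by
    funext n
    simp only [delta, Pi.smul_apply, smul_eq_mul, RingHom.id_apply]
    split <;> ring
  left_inv x := by
    funext n
    induction n with
    | zero => simp [delta]
    | succ k ih =>
      show (∑ i ∈ Finset.range (k + 1 + 1), delta x i) = x (k + 1)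
      rw [Finset.sum_range_succ]
      have ih' : (∑ i ∈ Finset.range (k + 1), delta x i) = x k := ih
      rw [ih']
      simp [delta]
  right_inv y := by
    funext n
    show delta (fun n => ∑ i ∈ Finset.range (n + 1), y i) n = y n
    cases n with
    | zero => simp [delta]
    | succ k => simp [delta, Finset.sum_range_succ]

/-- The space `bv_p`, as a submodule of the space of all complex sequences:
`x ∈ bv_p` iff `Δx ∈ ℓ^p`. -/
def bvSubmodule (p : ℝ≥0∞) : Submodule ℂ (ℕ → ℂ) where
  carrier := {x | Memℓp (delta x) p}
  add_mem' {x y} hx hy := by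
    have : delta (x + y) = delta x + delta y := map_add deltaL x y
    simpa [Set.mem_setOf_eq, this] using hx.add hy
  zero_mem' := by
    have : delta (0 : ℕ → ℂ) = 0 := map_zero deltaL
    simp [Set.mem_setOf_eq, this]
    exact zero_memℓp
  smul_mem' c x hx := by
    have : delta (c • x) = c • delta x := map_smul deltaL c x
    simpa [Set.mem_setOf_eq, this] using hx.const_smul c

/-- The space `bv_p` as a type.  (A `def`, not an `abbrev`, so that it does not pick up
the product topology of the ambient sequence space.) -/
def bv (p : ℝ≥0∞) : Type := ↥(bvSubmodule p)

namespace bv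

instance (p : ℝ≥0∞) : AddCommGroup (bv p) :=
  inferInstanceAs (AddCommGroup ↥(bvSubmodule p))

instance (p : ℝ≥0∞) : Module ℂ (bv p) :=
  inferInstanceAs (Module ℂ ↥(bvSubmodule p))

/-- The underlying sequence of an element of `bv_p`. -/
def seq {p : ℝ≥0∞} (x : bv p) : ℕ → ℂ := Subtype.val (x : ↥(bvSubmodule p))

lemma memℓp_delta {p : ℝ≥0∞} (x : bv p) : Memℓp (delta (seq x)) p :=
  (x : ↥(bvSubmodule p)).2

/-- The difference operator, as a linear map from `bv_p` to `ℓ^p`. -/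
def toLp (p : ℝ≥0∞) : bv p →ₗ[ℂ] lp (fun _ : ℕ => ℂ) p where
  toFun x := ⟨delta (seq x), memℓp_delta x⟩
  map_add' x y := by
    ext n
    have : delta (seq x + seq y) = delta (seq x) + delta (seq y) := map_add deltaL _ _
    change delta (seq (x + y)) n = _
    have hseq : seq (x + y) = seq x + seq y := rfl
    rw [hseq, this]
    rfl
  map_smul' c x := by
    ext n
    have : delta (c • seq x) = c • delta (seq x) := map_smul deltaL c _
    change delta (seq (c • x)) n = _
    have hseq : seq (c • x) = c • seq x := rfl
    rw [hseq, this]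
    rfl

lemma toLp_injective (p : ℝ≥0∞) : Function.Injective (toLp p) := by
  intro x y h
  have h' : delta (seq x) = delta (seq y) := by
    have := congrArg (Subtype.val) h
    exact this
  have : seq x = seq y := deltaL.injective h'
  exact Subtype.ext this

noncomputable instance (p : ℝ≥0∞) [Fact (1 ≤ p)] : NormedAddCommGroup (bv p) :=
  NormedAddCommGroup.induced (bv p) (lp (fun _ : ℕ => ℂ) p) (toLp p) (toLp_injective p)

noncomputable instance (p : ℝ≥0∞) [Fact (1 ≤ p)] : NormedSpace ℂ (bv p) :=
  NormedSpace.induced ℂ (bv p) (lp (fun _ : ℕ => ℂ) p) (toLp p)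

end bv

/-- The sequence `b^{(k+1)}`: `1` from position `k` on (positions indexed from `0`). -/
def bSeq (k : ℕ) : ℕ → ℂ := fun n => if k ≤ n then 1 else 0

/-- The sequence `e^{(k+1)}`: `1` exactly at position `k`. -/
def eSeq (k : ℕ) : ℕ → ℂ := fun n => if n = k then 1 else 0

lemma memℓp_eSeq (p : ℝ≥0∞) [Fact (1 ≤ p)] (k : ℕ) : Memℓp (eSeq k) p := by
  rcases eq_or_ne p ∞ with rfl | hp
  · apply memℓp_infty
    apply Set.Finite.bddAbove
    apply Set.Finite.subset (Set.finite_singleton (0:ℝ) |>.insert 1)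
    rintro r ⟨n, rfl⟩
    simp only [eSeq]
    split <;> simp
  · apply memℓp_gen
    apply summable_of_ne_finset_zero (s := {k})
    intro n hn
    simp only [Finset.mem_singleton] at hn
    simp only [eSeq, if_neg hn, norm_zero]
    have hp0 : 0 < p.toReal := by
      have h1 : (1 : ℝ≥0∞) ≤ p := Fact.out
      exact ENNReal.toReal_pos (by intro h; rw [h] at h1; simp at h1) hp
    exact Real.zero_rpow hp0.ne'

lemma delta_bSeq (k : ℕ) : delta (bSeq k) = eSeq k := by
  funext n
  rcases n with _ | m <;>
    simp only [delta, bSeq, eSeq, Nat.add_sub_cancel, Nat.succ_ne_zero, if_false, reduceIte,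
      sub_zero] <;>
    split_ifs <;> first | omega | (exfalso; omega) | (norm_num; done) | tauto

lemma delta_eSeq (k : ℕ) : delta (eSeq k) = eSeq k - eSeq (k + 1) := by
  funext n
  rcases n with _ | m <;>
    simp only [delta, eSeq, Pi.sub_apply, Nat.add_sub_cancel, Nat.succ_ne_zero, if_false,
      reduceIte, sub_zero] <;>
    split_ifs <;> first | omega | (exfalso; omega) | (norm_num; done) | tauto

/-- The element `b^{(k+1)}` of `bv_p`. -/
def bvB (p : ℝ≥0∞) [Fact (1 ≤ p)] (k : ℕ) : bv p :=
  ⟨bSeq k, show Memℓp (delta (bSeq k)) p by rw [delta_bSeq]; exact memℓp_eSeq p k⟩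

/-- The element `e^{(k+1)}` of `bv_p`. -/
def bvE (p : ℝ≥0∞) [Fact (1 ≤ p)] (k : ℕ) : bv p :=
  ⟨eSeq k, show Memℓp (delta (eSeq k)) p by
    rw [delta_eSeq]; exact (memℓp_eSeq p k).sub (memℓp_eSeq p (k + 1))⟩

section LpDuality

variable {p q : ℝ}

/-- Representation: a functional on `ℓ^p` is given by pairing with its values on basis vectors. -/
lemma rep_hasSum (hp1 : 1 < p) [Fact (1 ≤ ENNReal.ofReal p)]
    (g : lp (fun _ : ℕ => ℂ) (ENNReal.ofReal p) →L[ℂ] ℂ)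
    (f : lp (fun _ : ℕ => ℂ) (ENNReal.ofReal p)) :
    HasSum (fun k : ℕ => (f : ℕ → ℂ) k * g (lp.single (E := fun _ : ℕ => ℂ) (ENNReal.ofReal p) k 1)) (g f) := by
  have h1 := (lp.hasSum_single (E := fun _ : ℕ => ℂ) ENNReal.ofReal_ne_top f).mapL g
  convert h1 using 2 with k
  have h2 : lp.single (E := fun _ : ℕ => ℂ) (ENNReal.ofReal p) k ((f : ℕ → ℂ) k) =
      (f : ℕ → ℂ) k • lp.single (E := fun _ : ℕ => ℂ) (ENNReal.ofReal p) k (1 : ℂ) := by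
    have h3 : ((f : ℕ → ℂ) k) = ((f : ℕ → ℂ) k) • (1 : ℂ) := by rw [smul_eq_mul, mul_one]
    rw [h3, lp.single_smul]
    rw [← h3]
  rw [h2, map_smul, smul_eq_mul]

end LpDuality

section LpDuality2

variable {p q : ℝ} [Fact (1 ≤ ENNReal.ofReal p)] [Fact (1 ≤ ENNReal.ofReal q)]

local notation "LpC" P => lp (fun _ : ℕ => ℂ) P

lemma toReal_ofReal_of_conj (hpq : p.HolderConjugate q) :
    (ENNReal.ofReal p).toReal = p := ENNReal.toReal_ofReal hpq.nonneg

lemma conj_toReal (hpq : p.HolderConjugate q) :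
    (ENNReal.ofReal p).toReal.HolderConjugate (ENNReal.ofReal q).toReal := by
  rw [ENNReal.toReal_ofReal hpq.nonneg, ENNReal.toReal_ofReal hpq.symm.nonneg]
  exact hpq

lemma summable_pairing (hpq : p.HolderConjugate q)
    (a : LpC (ENNReal.ofReal q)) (f : LpC (ENNReal.ofReal p)) :
    Summable fun k : ℕ => (f : ℕ → ℂ) k * (a : ℕ → ℂ) k := by
  refine Summable.of_norm ?_
  have := lp.summable_mul (conj_toReal hpq) f a
  simpa [norm_mul] using this

lemma norm_tsum_pairing_le (hpq : p.HolderConjugate q)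
    (a : LpC (ENNReal.ofReal q)) (f : LpC (ENNReal.ofReal p)) :
    ‖∑' k : ℕ, (f : ℕ → ℂ) k * (a : ℕ → ℂ) k‖ ≤ ‖f‖ * ‖a‖ := by
  refine le_trans (norm_tsum_le_tsum_norm ?_) ?_
  · have := lp.summable_mul (conj_toReal hpq) f a
    simpa [norm_mul] using this
  · have := lp.tsum_mul_le_mul_norm' (conj_toReal hpq) f a
    simpa [norm_mul] using this

/-- The pairing functional `f ↦ ∑ f k * a k` as a continuous linear map. -/
def pairingCLM (hpq : p.HolderConjugate q) (a : LpC (ENNReal.ofReal q)) :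
    (LpC (ENNReal.ofReal p)) →L[ℂ] ℂ :=
  LinearMap.mkContinuous
    { toFun := fun f : LpC (ENNReal.ofReal p) => ∑' k : ℕ, (f : ℕ → ℂ) k * (a : ℕ → ℂ) k
      map_add' := by
        intro f g
        rw [← Summable.tsum_add (summable_pairing hpq a f) (summable_pairing hpq a g)]
        apply tsum_congr
        intro k
        have : ((f + g : LpC (ENNReal.ofReal p)) : ℕ → ℂ) k
            = (f : ℕ → ℂ) k + (g : ℕ → ℂ) k := rfl
        rw [this]; ring
      map_smul' := by
        intro c f
        rw [RingHom.id_apply]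
        simp only [smul_eq_mul]
        rw [← tsum_mul_left]
        apply tsum_congr
        intro k
        have : ((c • f : LpC (ENNReal.ofReal p)) : ℕ → ℂ) k = c * (f : ℕ → ℂ) k := rfl
        rw [this]; ring }
    ‖a‖
    (by
      intro f
      simp only [LinearMap.coe_mk, AddHom.coe_mk]
      calc ‖∑' k : ℕ, (f : ℕ → ℂ) k * (a : ℕ → ℂ) k‖ ≤ ‖f‖ * ‖a‖ :=
            norm_tsum_pairing_le hpq a f
        _ = ‖a‖ * ‖f‖ := mul_comm _ _)

lemma pairingCLM_apply (hpq : p.HolderConjugate q) (a : LpC (ENNReal.ofReal q))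
    (f : LpC (ENNReal.ofReal p)) :
    pairingCLM hpq a f = ∑' k : ℕ, (f : ℕ → ℂ) k * (a : ℕ → ℂ) k := rfl

lemma norm_pairingCLM_le (hpq : p.HolderConjugate q) (a : LpC (ENNReal.ofReal q)) :
    ‖pairingCLM hpq a‖ ≤ ‖a‖ :=
  LinearMap.mkContinuous_norm_le _ (norm_nonneg a) _

end LpDuality2

section LpDuality3

variable {p q : ℝ} [Fact (1 ≤ ENNReal.ofReal p)] [Fact (1 ≤ ENNReal.ofReal q)]

local notation "LpC" P => lp (fun _ : ℕ => ℂ) P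

/-- The coefficient sequence of a functional on `ℓ^p`. -/
def coefFn (g : (LpC (ENNReal.ofReal p)) →L[ℂ] ℂ) : ℕ → ℂ :=
  fun k => g (lp.single (E := fun _ : ℕ => ℂ) (ENNReal.ofReal p) k 1)

lemma rep_tsum (hpq : p.HolderConjugate q) (g : (LpC (ENNReal.ofReal p)) →L[ℂ] ℂ)
    (f : LpC (ENNReal.ofReal p)) :
    g f = ∑' k : ℕ, (f : ℕ → ℂ) k * coefFn (p := p) g k :=
  (rep_hasSum hpq.lt g f).tsum_eq.symm

/-- Truncated dual sequence. -/
def trunc (q : ℝ) (a : ℕ → ℂ) (s : Finset ℕ) : ℕ → ℂ :=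
  fun k => if k ∈ s then ((‖a k‖ ^ (q - 2) : ℝ) : ℂ) * (starRingEnd ℂ) (a k) else 0

omit [Fact (1 ≤ ENNReal.ofReal p)] [Fact (1 ≤ ENNReal.ofReal q)] in
lemma mul_trunc (hpq : p.HolderConjugate q) (a : ℕ → ℂ) (s : Finset ℕ) (k : ℕ) :
    a k * trunc q a s k = if k ∈ s then ((‖a k‖ ^ q : ℝ) : ℂ) else 0 := by
  unfold trunc
  by_cases hk : k ∈ s
  · simp only [if_pos hk]
    by_cases ha : a k = 0
    · simp [ha, Real.zero_rpow hpq.symm.ne_zero]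
    · have hn : (0 : ℝ) < ‖a k‖ := norm_pos_iff.mpr ha
      have h1 : a k * (((‖a k‖ ^ (q - 2) : ℝ) : ℂ) * (starRingEnd ℂ) (a k))
          = ((‖a k‖ ^ (q - 2) : ℝ) : ℂ) * (a k * (starRingEnd ℂ) (a k)) := by ring
      rw [h1, Complex.mul_conj]
      rw [Complex.normSq_eq_norm_sq]
      have h2 : (‖a k‖ ^ 2 : ℝ) = ‖a k‖ ^ ((2 : ℕ) : ℝ) := by
        rw [Real.rpow_natCast]
      push_cast
      rw [← Complex.ofReal_pow, ← Complex.ofReal_mul, h2, ← Real.rpow_add hn]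
      norm_num
  · simp [if_neg hk]

omit [Fact (1 ≤ ENNReal.ofReal p)] [Fact (1 ≤ ENNReal.ofReal q)] in
lemma norm_trunc_rpow (hpq : p.HolderConjugate q) (a : ℕ → ℂ) (s : Finset ℕ) (k : ℕ) :
    ‖trunc q a s k‖ ^ p = if k ∈ s then ‖a k‖ ^ q else 0 := by
  unfold trunc
  by_cases hk : k ∈ s
  · simp only [if_pos hk]
    by_cases ha : a k = 0
    · simp [ha, Real.zero_rpow hpq.symm.ne_zero, Real.zero_rpow hpq.ne_zero]
    · have hn : (0 : ℝ) < ‖a k‖ := norm_pos_iff.mpr ha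
      have h1 : ‖((‖a k‖ ^ (q - 2) : ℝ) : ℂ) * (starRingEnd ℂ) (a k)‖
          = ‖a k‖ ^ (q - 2) * ‖a k‖ := by
        rw [norm_mul, Complex.norm_real, RingHomIsometric.norm_map,
          Real.norm_eq_abs, abs_of_nonneg (Real.rpow_nonneg hn.le _)]
      rw [h1]
      have h2 : ‖a k‖ ^ (q - 2) * ‖a k‖ = ‖a k‖ ^ (q - 1) := by
        nth_rewrite 2 [← Real.rpow_one ‖a k‖]
        rw [← Real.rpow_add hn]
        congr 1
        ring
      rw [h2, ← Real.rpow_mul hn.le, hpq.symm.sub_one_mul_conj]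
  · simp only [if_neg hk, norm_zero]
    exact Real.zero_rpow hpq.ne_zero

end LpDuality3

section LpDuality4

variable {p q : ℝ} [Fact (1 ≤ ENNReal.ofReal p)] [Fact (1 ≤ ENNReal.ofReal q)]

local notation "LpC" P => lp (fun _ : ℕ => ℂ) P

lemma memℓp_trunc (hpq : p.HolderConjugate q) (a : ℕ → ℂ) (s : Finset ℕ) :
    Memℓp (trunc q a s) (ENNReal.ofReal p) := by
  apply memℓp_gen
  apply summable_of_ne_finset_zero (s := s)
  intro k hk
  rw [toReal_ofReal_of_conj hpq, norm_trunc_rpow hpq, if_neg hk]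

/-- The truncation as an element of `ℓ^p`. -/
def truncLp (hpq : p.HolderConjugate q) (a : ℕ → ℂ) (s : Finset ℕ) :
    LpC (ENNReal.ofReal p) := ⟨trunc q a s, memℓp_trunc hpq a s⟩

lemma norm_truncLp (hpq : p.HolderConjugate q) (a : ℕ → ℂ) (s : Finset ℕ) :
    ‖truncLp (q := q) hpq a s‖ = (∑ k ∈ s, ‖a k‖ ^ q) ^ (1 / p) := by
  have hp' : 0 < (ENNReal.ofReal p).toReal := by
    rw [toReal_ofReal_of_conj hpq]; exact hpq.pos
  rw [lp.norm_eq_tsum_rpow hp']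
  rw [toReal_ofReal_of_conj hpq]
  congr 1
  have hvan : ∀ k ∉ s, ‖(truncLp (q := q) hpq a s : ℕ → ℂ) k‖ ^ p = 0 := by
    intro k hk
    have : (truncLp (q := q) hpq a s : ℕ → ℂ) k = trunc q a s k := rfl
    rw [this, norm_trunc_rpow hpq, if_neg hk]
  rw [tsum_eq_sum hvan]
  apply Finset.sum_congr rfl
  intro k hk
  have : (truncLp (q := q) hpq a s : ℕ → ℂ) k = trunc q a s k := rfl
  rw [this, norm_trunc_rpow hpq, if_pos hk]

lemma coef_sum_le (hpq : p.HolderConjugate q) (g : (LpC (ENNReal.ofReal p)) →L[ℂ] ℂ)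
    (s : Finset ℕ) : (∑ k ∈ s, ‖coefFn (p := p) g k‖ ^ q) ≤ ‖g‖ ^ q := by
  set a : ℕ → ℂ := coefFn (p := p) g with ha
  set S : ℝ := ∑ k ∈ s, ‖a k‖ ^ q with hS
  have hS0 : 0 ≤ S := Finset.sum_nonneg fun k _ => Real.rpow_nonneg (norm_nonneg _) _
  have hval : g (truncLp (q := q) hpq a s) = ((S : ℝ) : ℂ) := by
    rw [rep_tsum hpq]
    have hvan : ∀ k ∉ s,
        (truncLp (q := q) hpq a s : ℕ → ℂ) k * a k = 0 := by
      intro k hk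
      have h0 : (truncLp (q := q) hpq a s : ℕ → ℂ) k = trunc q a s k := rfl
      rw [h0]
      unfold trunc
      rw [if_neg hk, zero_mul]
    rw [tsum_eq_sum hvan, hS]
    push_cast
    apply Finset.sum_congr rfl
    intro k hk
    have h0 : (truncLp (q := q) hpq a s : ℕ → ℂ) k = trunc q a s k := rfl
    rw [h0, mul_comm, mul_trunc hpq, if_pos hk]
  have hbound : S ≤ ‖g‖ * S ^ (1 / p) := by
    have h1 : ‖g (truncLp (q := q) hpq a s)‖ ≤ ‖g‖ * ‖truncLp (q := q) hpq a s‖ :=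
      g.le_opNorm _
    rw [hval, norm_truncLp hpq] at h1
    rwa [Complex.norm_real, Real.norm_eq_abs, abs_of_nonneg hS0] at h1
  rcases eq_or_lt_of_le hS0 with hS0' | hSpos
  · rw [← hS0']
    exact Real.rpow_nonneg (norm_nonneg g) q
  · have hq1 : S ^ (1 / q) ≤ ‖g‖ := by
      have hsum1 : 1 / p + 1 / q = 1 := by
        rw [one_div, one_div]; exact hpq.inv_add_inv_eq_one
      have hSsplit : S = S ^ (1 / q) * S ^ (1 / p) := by
        rw [← Real.rpow_add hSpos]
        rw [add_comm] at hsum1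
        rw [hsum1, Real.rpow_one]
      have hppos : 0 < S ^ (1 / p) := Real.rpow_pos_of_pos hSpos _
      have hkey : S ^ (1 / q) * S ^ (1 / p) ≤ ‖g‖ * S ^ (1 / p) := by
        rw [← hSsplit]; exact hbound
      exact le_of_mul_le_mul_right hkey hppos
    calc S = (S ^ (1 / q)) ^ q := by
          rw [← Real.rpow_mul hS0, one_div_mul_cancel hpq.symm.ne_zero, Real.rpow_one]
      _ ≤ ‖g‖ ^ q := Real.rpow_le_rpow (Real.rpow_nonneg hS0 _) hq1 hpq.symm.nonneg

end LpDuality4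

section LpDuality5

variable {p q : ℝ} [Fact (1 ≤ ENNReal.ofReal p)] [Fact (1 ≤ ENNReal.ofReal q)]

local notation "LpC" P => lp (fun _ : ℕ => ℂ) P

lemma memℓp_coefFn (hpq : p.HolderConjugate q) (g : (LpC (ENNReal.ofReal p)) →L[ℂ] ℂ) :
    Memℓp (coefFn (p := p) g) (ENNReal.ofReal q) := by
  apply memℓp_gen
  rw [toReal_ofReal_of_conj hpq.symm]
  exact summable_of_sum_le (fun k => Real.rpow_nonneg (norm_nonneg _) _)
    (coef_sum_le hpq g)

/-- The coefficient sequence as an element of `ℓ^q`. -/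
def coefLp (hpq : p.HolderConjugate q) (g : (LpC (ENNReal.ofReal p)) →L[ℂ] ℂ) :
    LpC (ENNReal.ofReal q) := ⟨coefFn (p := p) g, memℓp_coefFn hpq g⟩

lemma norm_coefLp_le (hpq : p.HolderConjugate q) (g : (LpC (ENNReal.ofReal p)) →L[ℂ] ℂ) :
    ‖coefLp hpq g‖ ≤ ‖g‖ := by
  have hq' : 0 < (ENNReal.ofReal q).toReal := by
    rw [toReal_ofReal_of_conj hpq.symm]; exact hpq.symm.pos
  rw [lp.norm_eq_tsum_rpow hq']
  rw [toReal_ofReal_of_conj hpq.symm]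
  have htsum : ∑' k : ℕ, ‖coefFn (p := p) g k‖ ^ q ≤ ‖g‖ ^ q :=
    Summable.tsum_le_of_sum_le (summable_of_sum_le
      (fun k => Real.rpow_nonneg (norm_nonneg _) _) (coef_sum_le hpq g))
      (coef_sum_le hpq g)
  calc (∑' k : ℕ, ‖(coefLp hpq g : ℕ → ℂ) k‖ ^ q) ^ (1 / q)
      ≤ (‖g‖ ^ q) ^ (1 / q) := by
        apply Real.rpow_le_rpow (tsum_nonneg fun k => Real.rpow_nonneg (norm_nonneg _) _)
          ?_ hpq.symm.one_div_nonneg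
        exact htsum
    _ = ‖g‖ := by
        rw [← Real.rpow_mul (norm_nonneg g), mul_one_div, div_self hpq.symm.ne_zero,
          Real.rpow_one]

/-- `ℓ^p` duality: the dual of `ℓ^p` is isometrically `ℓ^q`. -/
def lpDualEquiv (hpq : p.HolderConjugate q) :
    ((LpC (ENNReal.ofReal p)) →L[ℂ] ℂ) ≃ₗᵢ[ℂ] (LpC (ENNReal.ofReal q)) where
  toLinearEquiv :=
    { toFun := fun g => coefLp hpq g
      map_add' := by
        intro g h
        apply Subtype.ext
        funext k
        show coefFn (p := p) (g + h) k = coefFn (p := p) g k + coefFn (p := p) h k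
        simp [coefFn]
      map_smul' := by
        intro c g
        apply Subtype.ext
        funext k
        show coefFn (p := p) (c • g) k = c * coefFn (p := p) g k
        simp [coefFn]
      invFun := fun a => pairingCLM hpq a
      left_inv := by
        intro g
        apply ContinuousLinearMap.ext
        intro f
        rw [pairingCLM_apply]
        exact (rep_tsum hpq g f).symm
      right_inv := by
        intro a
        apply Subtype.ext
        funext k
        show coefFn (p := p) (pairingCLM hpq a) k = (a : ℕ → ℂ) k
        rw [coefFn, pairingCLM_apply]
        rw [tsum_eq_single k]
        · rw [lp.single_apply_self, one_mul]
        · intro j hj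
          rw [lp.single_apply_ne _ _ _ hj, zero_mul] }
  norm_map' := by
    intro g
    refine le_antisymm (norm_coefLp_le hpq g) ?_
    have h1 : pairingCLM hpq (coefLp hpq g) = g := by
      apply ContinuousLinearMap.ext
      intro f
      rw [pairingCLM_apply]
      exact (rep_tsum hpq g f).symm
    calc ‖g‖ = ‖pairingCLM hpq (coefLp hpq g)‖ := by rw [h1]
      _ ≤ ‖coefLp hpq g‖ := norm_pairingCLM_le hpq _

lemma lpDualEquiv_apply (hpq : p.HolderConjugate q) (g : (LpC (ENNReal.ofReal p)) →L[ℂ] ℂ)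
    (k : ℕ) : (lpDualEquiv hpq g : ℕ → ℂ) k
      = g (lp.single (E := fun _ : ℕ => ℂ) (ENNReal.ofReal p) k 1) := rfl

end LpDuality5

section BvSide

/-- Transport of duals along a linear isometric equivalence. -/
def dualCongrIso {E F : Type*} [NormedAddCommGroup E] [NormedSpace ℂ E]
    [NormedAddCommGroup F] [NormedSpace ℂ F] (e : E ≃ₗᵢ[ℂ] F) :
    (E →L[ℂ] ℂ) ≃ₗᵢ[ℂ] (F →L[ℂ] ℂ) where
  toLinearEquiv :=
    { toFun := fun f => f.comp e.symm.toLinearIsometry.toContinuousLinearMap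
      map_add' := fun f g => by ext x; rfl
      map_smul' := fun c f => by ext x; rfl
      invFun := fun g => g.comp e.toLinearIsometry.toContinuousLinearMap
      left_inv := fun f => by ext x; exact congrArg f (e.symm_apply_apply x)
      right_inv := fun g => by ext x; exact congrArg g (e.apply_symm_apply x) }
  norm_map' := fun f => ContinuousLinearMap.opNorm_comp_linearIsometryEquiv f e.symm

lemma dualCongrIso_apply {E F : Type*} [NormedAddCommGroup E] [NormedSpace ℂ E]
    [NormedAddCommGroup F] [NormedSpace ℂ F] (e : E ≃ₗᵢ[ℂ] F) (f : E →L[ℂ] ℂ) (x : F) :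
    dualCongrIso e f x = f (e.symm x) := rfl

variable (P : ℝ≥0∞) [Fact (1 ≤ P)]

lemma bv_norm_eq (x : bv P) : ‖x‖ = ‖bv.toLp P x‖ := rfl

/-- `bv_p` is isometrically `ℓ^p` via the difference operator. -/
def bvEquivLp : bv P ≃ₗᵢ[ℂ] lp (fun _ : ℕ => ℂ) P where
  toLinearEquiv := LinearEquiv.ofBijective (bv.toLp P)
    ⟨bv.toLp_injective P, by
      intro y
      have hy : Memℓp (delta (deltaL.symm (y : ℕ → ℂ))) P := by
        have h1 : delta (deltaL.symm (y : ℕ → ℂ)) = (y : ℕ → ℂ) :=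
          deltaL.apply_symm_apply (y : ℕ → ℂ)
        rw [h1]
        exact lp.memℓp y
      refine ⟨⟨deltaL.symm (y : ℕ → ℂ), hy⟩, ?_⟩
      apply Subtype.ext
      exact deltaL.apply_symm_apply (y : ℕ → ℂ)⟩
  norm_map' := fun x => rfl

lemma bvEquivLp_apply (x : bv P) : bvEquivLp P x = bv.toLp P x := rfl

end BvSide


/-- For conjugate exponents `1 < p, q < ∞`, the map `ψ : bv_p* → l_q`,
`ψ(f) = (f(b^{(k)}))_{k≥1}`, is an isometric linear isomorphism; in particular `bv_p*` is
isometrically isomorphic to `l_q`. -/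
theorem bvp_dual_isometric_lq (p q : ℝ) (hp : 1 < p) (hq : 1 < q)
    (hpq : 1 / p + 1 / q = 1) [Fact (1 ≤ ENNReal.ofReal p)] [Fact (1 ≤ ENNReal.ofReal q)] :
    ∃ ψ : (bv (ENNReal.ofReal p) →L[ℂ] ℂ) ≃ₗᵢ[ℂ] lp (fun _ : ℕ => ℂ) (ENNReal.ofReal q),
      ∀ (f : bv (ENNReal.ofReal p) →L[ℂ] ℂ) (k : ℕ),
        (ψ f : ∀ _ : ℕ, ℂ) k = f (bvB (ENNReal.ofReal p) k) := by
  have hpq' : p.HolderConjugate q := Real.holderConjugate_iff.mpr ⟨hp, by rw [one_div, one_div] at hpq; exact hpq⟩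
  refine ⟨(dualCongrIso (bvEquivLp (ENNReal.ofReal p))).trans (lpDualEquiv hpq'), ?_⟩
  intro f k
  have hb : bvEquivLp (ENNReal.ofReal p) (bvB (ENNReal.ofReal p) k)
      = lp.single (E := fun _ : ℕ => ℂ) (ENNReal.ofReal p) k 1 := by
    apply Subtype.ext
    funext j
    show delta (bSeq k) j = lp.single (E := fun _ : ℕ => ℂ) (ENNReal.ofReal p) k 1 j
    rw [delta_bSeq, lp.single_apply]
    by_cases hj : j = k
    · subst hj; simp [eSeq]
    · simp [eSeq, hj]
  have hsymm : (bvEquivLp (ENNReal.ofReal p)).symm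
      (lp.single (E := fun _ : ℕ => ℂ) (ENNReal.ofReal p) k 1) = bvB (ENNReal.ofReal p) k := by
    rw [← hb, LinearIsometryEquiv.symm_apply_apply]
  show (lpDualEquiv hpq' (dualCongrIso (bvEquivLp (ENNReal.ofReal p)) f) : ℕ → ℂ) k
      = f (bvB (ENNReal.ofReal p) k)
  rw [lpDualEquiv_apply, dualCongrIso_apply, hsymm]
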